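/- Fix a real ξ > 0. The function υ(·, ξ) : (0,∞) → ℝ defined by υ(α, ξ) = α² e^{αξ} / (e^{αξ} − 1)² is strictly decreasing in α on (0,∞). -/

import Mathlib

private lemma aux_key (t : ℝ) (ht : 0 < t) :
    2 * (Real.exp t - 1) < t * (1 + Real.exp t) := by
  have hmono : StrictMonoOn (fun x : ℝ => x * (1 + Real.exp x) - 2 * (Real.exp x - 1))
      (Set.Ici (0 : ℝ)) := by
    apply strictMonoOn_of_deriv_pos (convex_Ici 0)
    · fun_prop
    · intro x hx
      rw [interior_Ici] at hx
      have hd : HasDerivAt (fun x : ℝ => x * (1 + Real.exp x) - 2 * (Real.exp x - 1))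
          (1 * (1 + Real.exp x) + x * Real.exp x - 2 * Real.exp x) x := by
        exact (((hasDerivAt_id x).mul ((hasDerivAt_const x (1:ℝ)).add (Real.hasDerivAt_exp x))).sub
          (((Real.hasDerivAt_exp x).sub_const 1).const_mul 2)).congr_deriv (by simp only [Pi.add_apply, id]; ring)
      rw [hd.deriv]
      have h1 : (-x) + 1 < Real.exp (-x) := Real.add_one_lt_exp (by linarith [hx.out])
      have h3 : 0 < Real.exp x := Real.exp_pos x
      have hmul := mul_lt_mul_of_pos_right h1 h3
      rw [Real.exp_neg, inv_mul_cancel₀ (ne_of_gt h3)] at hmul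
      nlinarith [hmul]
  have h0 : (0:ℝ) ∈ Set.Ici (0:ℝ) := Set.mem_Ici.mpr le_rfl
  have ht' : t ∈ Set.Ici (0:ℝ) := le_of_lt ht
  have := hmono h0 ht' ht
  simp [Real.exp_zero] at this
  linarith

/-- For fixed `ξ > 0`, the function
`α ↦ υ(α, ξ) = α² e^{αξ} / (e^{αξ} − 1)²` is strictly decreasing on `(0, ∞)`. -/
theorem upsilon_strictAntiOn (ξ : ℝ) (hξ : 0 < ξ) :
    StrictAntiOn (fun α : ℝ => α ^ 2 * Real.exp (α * ξ) / (Real.exp (α * ξ) - 1) ^ 2)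
      (Set.Ioi (0 : ℝ)) := by
  have hInt : interior (Set.Ioi (0:ℝ)) = Set.Ioi 0 := interior_Ioi
  apply strictAntiOn_of_deriv_neg (convex_Ioi 0)
  · apply ContinuousOn.div
    · fun_prop
    · fun_prop
    · intro x hx
      have h1 : 1 < Real.exp (x * ξ) := by
        rw [show (1:ℝ) = Real.exp 0 by simp]
        exact Real.exp_lt_exp.mpr (mul_pos hx hξ)
      exact pow_ne_zero 2 (ne_of_gt (by linarith))
  · intro α hα
    rw [hInt] at hα
    have hα0 : 0 < α := hα
    set e := Real.exp (α * ξ) with he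
    have h1 : 1 < e := by
      rw [he, show (1:ℝ) = Real.exp 0 by simp]
      exact Real.exp_lt_exp.mpr (mul_pos hα0 hξ)
    have hv : (e - 1) ^ 2 ≠ 0 := pow_ne_zero 2 (ne_of_gt (by linarith))
    have hexp : HasDerivAt (fun a : ℝ => Real.exp (a * ξ)) (e * ξ) α := by
      have := (Real.hasDerivAt_exp (α * ξ)).comp α ((hasDerivAt_id α).mul_const ξ)
      exact this.congr_deriv (by simp [he])
    have hu : HasDerivAt (fun a : ℝ => a ^ 2 * Real.exp (a * ξ))
        ((2 * α ^ 1) * e + α ^ 2 * (e * ξ)) α := by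
      exact ((hasDerivAt_pow 2 α).mul hexp).congr_deriv (by norm_num [he])
    have hvd : HasDerivAt (fun a : ℝ => (Real.exp (a * ξ) - 1) ^ 2)
        (2 * (e - 1) ^ 1 * (e * ξ)) α := by
      exact (hexp.sub_const 1).pow 2
    have hf : HasDerivAt (fun a : ℝ => a ^ 2 * Real.exp (a * ξ) / (Real.exp (a * ξ) - 1) ^ 2)
        ((((2 * α ^ 1) * e + α ^ 2 * (e * ξ)) * (e - 1) ^ 2 -
          α ^ 2 * e * (2 * (e - 1) ^ 1 * (e * ξ))) / ((e - 1) ^ 2) ^ 2) α :=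
      hu.div hvd hv
    rw [hf.deriv]
    apply div_neg_of_neg_of_pos
    · have hkey := aux_key (α * ξ) (mul_pos hα0 hξ)
      rw [← he] at hkey
      have he0 : 0 < e := lt_trans one_pos h1
      nlinarith [mul_pos (mul_pos hα0 he0) (sub_pos.mpr h1),
        mul_pos (mul_pos (mul_pos hα0 he0) (sub_pos.mpr h1)) (sub_pos.mpr h1)]
    · have : 0 < e - 1 := by linarith
      positivity
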